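/- Deterministic excess-risk bound for objective perturbation (strongly convex case): Let C ⊆ ℝ^p be a convex set, N a norm on ℝ^p, Δ > 0, and let L : ℝ^p → ℝ be Δ-strongly convex with respect to N on C. Let b ∈ ℝ^p, suppose θ^priv ∈ C attains the minimum over C of θ ↦ L(θ) + ⟨b, θ⟩, and θ* ∈ C attains the minimum of L over C. Then N(θ^priv − θ*) ≤ 2·N*(b)/Δ and L(θ^priv) − L(θ*) ≤ 2·N*(b)²/Δ. -/

import Mathlib

open RealInnerProductSpace

/-- The dual norm `N*(g) = sup { ⟨g, v⟩ : N(v) ≤ 1 }` of a norm `N` on `ℝ^p`. -/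
noncomputable def dualNorm {p : ℕ} (N : EuclideanSpace ℝ (Fin p) → ℝ)
    (g : EuclideanSpace ℝ (Fin p)) : ℝ :=
  sSup {r : ℝ | ∃ v : EuclideanSpace ℝ (Fin p), N v ≤ 1 ∧ r = ⟪g, v⟫}

/-- `N` is a norm on `ℝ^p`. -/
def IsNorm {p : ℕ} (N : EuclideanSpace ℝ (Fin p) → ℝ) : Prop :=
  (∀ x y, N (x + y) ≤ N x + N y) ∧ (∀ (c : ℝ) (x : EuclideanSpace ℝ (Fin p)),
    N (c • x) = |c| * N x) ∧ (∀ x, N x = 0 ↔ x = 0)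

namespace OPaux

variable {p : ℕ} {N : EuclideanSpace ℝ (Fin p) → ℝ}

lemma N_zero (hN : IsNorm N) : N 0 = 0 := (hN.2.2 0).mpr rfl

lemma N_neg (hN : IsNorm N) (x : EuclideanSpace ℝ (Fin p)) : N (-x) = N x := by
  have := hN.2.1 (-1) x
  simpa using this

lemma N_nonneg (hN : IsNorm N) (x : EuclideanSpace ℝ (Fin p)) : 0 ≤ N x := by
  have h := hN.1 x (-x)
  rw [add_neg_cancel, N_zero hN, N_neg hN] at h
  linarith

lemma N_sum_le (hN : IsNorm N) {ι : Type*} (s : Finset ι)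
    (f : ι → EuclideanSpace ℝ (Fin p)) :
    N (∑ i ∈ s, f i) ≤ ∑ i ∈ s, N (f i) := by
  classical
  induction s using Finset.cons_induction with
  | empty => simp [N_zero hN]
  | cons a s ha ih =>
    rw [Finset.sum_cons, Finset.sum_cons]
    exact le_trans (hN.1 _ _) (by linarith)

lemma abs_coord_le (x : EuclideanSpace ℝ (Fin p)) (i : Fin p) : |x i| ≤ ‖x‖ := by
  have h1 : ⟪EuclideanSpace.single i (1:ℝ), x⟫ = x i := by
    simp [EuclideanSpace.inner_single_left]
  calc |x i| = |⟪EuclideanSpace.single i (1:ℝ), x⟫| := by rw [h1]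
    _ ≤ ‖EuclideanSpace.single i (1:ℝ)‖ * ‖x‖ := abs_real_inner_le_norm _ _
    _ = ‖x‖ := by simp [EuclideanSpace.norm_single]

/-- Upper bound: `N x ≤ M * ‖x‖`. -/
lemma exists_upper (hN : IsNorm N) : ∃ M : ℝ, 0 ≤ M ∧ ∀ x, N x ≤ M * ‖x‖ := by
  classical
  set e : Fin p → EuclideanSpace ℝ (Fin p) := fun i => EuclideanSpace.single i 1
  refine ⟨∑ i, N (e i), Finset.sum_nonneg fun i _ => N_nonneg hN _, fun x => ?_⟩
  have hx : x = ∑ i, x i • e i := by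
    ext j
    have h : (∑ i : Fin p, x i • e i) j = ∑ i : Fin p, (x i • e i) j :=
      by rw [WithLp.ofLp_sum]; exact Finset.sum_apply j Finset.univ _
    rw [h]
    simp [e, EuclideanSpace.single_apply]
  calc N x = N (∑ i, x i • e i) := by rw [← hx]
    _ ≤ ∑ i, N (x i • e i) := N_sum_le hN _ _
    _ = ∑ i, |x i| * N (e i) := by simp [hN.2.1]
    _ ≤ ∑ i, ‖x‖ * N (e i) := by
        refine Finset.sum_le_sum fun i _ => ?_
        exact mul_le_mul_of_nonneg_right (abs_coord_le x i) (N_nonneg hN _)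
    _ = (∑ i, N (e i)) * ‖x‖ := by simp [Finset.sum_mul, mul_comm]

lemma N_lipschitz (hN : IsNorm N) (x y : EuclideanSpace ℝ (Fin p)) :
    |N x - N y| ≤ N (x - y) := by
  have h1 : N x ≤ N (x - y) + N y := by
    have := hN.1 (x - y) y
    simpa using this
  have h2 : N y ≤ N (x - y) + N x := by
    have := hN.1 (y - x) x
    rw [sub_add_cancel] at this
    rw [show y - x = -(x - y) by abel, N_neg hN] at this
    linarith
  rw [abs_sub_le_iff]
  constructor <;> linarith

lemma N_continuous (hN : IsNorm N) : Continuous N := by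
  obtain ⟨M, hM0, hM⟩ := exists_upper hN
  refine (LipschitzWith.of_dist_le_mul (K := M.toNNReal) fun x y => ?_).continuous
  have h := (N_lipschitz hN x y).trans (hM (x - y))
  rw [Real.dist_eq, dist_eq_norm]
  calc |N x - N y| ≤ M * ‖x - y‖ := h
    _ ≤ (M.toNNReal : ℝ) * ‖x - y‖ := by
        exact mul_le_mul_of_nonneg_right (Real.le_coe_toNNReal M) (norm_nonneg _)

lemma exists_lower (hN : IsNorm N) : ∃ c : ℝ, 0 < c ∧ ∀ v, c * ‖v‖ ≤ N v := by
  rcases Nat.eq_zero_or_pos p with hp | hp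
  · refine ⟨1, one_pos, fun v => ?_⟩
    have hv : v = 0 := by
      subst hp
      ext i
      exact Fin.elim0 i
    simp [hv, N_zero hN]
  · haveI : Nontrivial (EuclideanSpace ℝ (Fin p)) := by
      refine ⟨0, EuclideanSpace.single ⟨0, hp⟩ 1, fun h => ?_⟩
      have := congrArg (fun z : EuclideanSpace ℝ (Fin p) => z ⟨0, hp⟩) h
      simp [EuclideanSpace.single_apply] at this
    have hne : (Metric.sphere (0 : EuclideanSpace ℝ (Fin p)) 1).Nonempty :=
      NormedSpace.sphere_nonempty.mpr zero_le_one
    obtain ⟨v0, hv0, hmin⟩ := (isCompact_sphere (0 : EuclideanSpace ℝ (Fin p)) 1)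
      |>.exists_isMinOn hne (N_continuous hN).continuousOn
    have hv0norm : ‖v0‖ = 1 := by simpa using hv0
    have hv0ne : v0 ≠ 0 := by
      intro h; rw [h] at hv0norm; simp at hv0norm
    have hc : 0 < N v0 :=
      lt_of_le_of_ne (N_nonneg hN v0) fun h => hv0ne ((hN.2.2 v0).mp h.symm)
    refine ⟨N v0, hc, fun v => ?_⟩
    rcases eq_or_ne v 0 with rfl | hv
    · simp [N_zero hN]
    · have hvn : (0:ℝ) < ‖v‖ := norm_pos_iff.mpr hv
      set u : EuclideanSpace ℝ (Fin p) := ‖v‖⁻¹ • v with hu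
      have hunorm : u ∈ Metric.sphere (0 : EuclideanSpace ℝ (Fin p)) 1 := by
        simp [hu, norm_smul, abs_of_pos (inv_pos.mpr hvn), inv_mul_cancel₀ hvn.ne']
      have h1 : N v0 ≤ N u := hmin hunorm
      have h2 : N u = ‖v‖⁻¹ * N v := by
        rw [hu, hN.2.1, abs_of_pos (inv_pos.mpr hvn)]
      rw [h2] at h1
      calc N v0 * ‖v‖ ≤ (‖v‖⁻¹ * N v) * ‖v‖ :=
            mul_le_mul_of_nonneg_right h1 (norm_nonneg _)
        _ = N v := by field_simp

lemma dualNorm_spec (hN : IsNorm N) (b : EuclideanSpace ℝ (Fin p)) :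
    0 ≤ dualNorm N b ∧ ∀ v, ⟪b, v⟫ ≤ dualNorm N b * N v := by
  obtain ⟨c, hc, hlow⟩ := exists_lower hN
  have hbdd : BddAbove {r : ℝ | ∃ v : EuclideanSpace ℝ (Fin p), N v ≤ 1 ∧ r = ⟪b, v⟫} := by
    refine ⟨‖b‖ * c⁻¹, fun r hr => ?_⟩
    obtain ⟨v, hv1, rfl⟩ := hr
    have h1 : ‖v‖ ≤ c⁻¹ := by
      have h2 : c * c⁻¹ = 1 := mul_inv_cancel₀ hc.ne'
      nlinarith [hlow v, hv1, hc]
    calc ⟪b, v⟫ ≤ ‖b‖ * ‖v‖ := real_inner_le_norm b v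
      _ ≤ ‖b‖ * c⁻¹ := mul_le_mul_of_nonneg_left h1 (norm_nonneg _)
  have hmem0 : (0:ℝ) ∈ {r : ℝ | ∃ v : EuclideanSpace ℝ (Fin p), N v ≤ 1 ∧ r = ⟪b, v⟫} :=
    ⟨0, by simp [N_zero hN], by simp⟩
  have hDnn : 0 ≤ dualNorm N b := le_csSup hbdd hmem0
  refine ⟨hDnn, fun v => ?_⟩
  rcases eq_or_lt_of_le (N_nonneg hN v) with h0 | h0
  · have hv0 : v = 0 := (hN.2.2 v).mp h0.symm
    simp [hv0, N_zero hN]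
  · set nv := N v with hnv
    set u : EuclideanSpace ℝ (Fin p) := nv⁻¹ • v with hu
    have hNu : N u ≤ 1 := by
      rw [hu, hN.2.1, abs_of_pos (inv_pos.mpr h0), ← hnv, inv_mul_cancel₀ h0.ne']
    have hmem : ⟪b, u⟫ ∈ {r : ℝ | ∃ w : EuclideanSpace ℝ (Fin p), N w ≤ 1 ∧ r = ⟪b, w⟫} :=
      ⟨u, hNu, rfl⟩
    have hle : ⟪b, u⟫ ≤ dualNorm N b := le_csSup hbdd hmem
    have hvu : v = nv • u := by
      rw [hu, smul_smul, mul_inv_cancel₀ h0.ne', one_smul]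
    calc ⟪b, v⟫ = nv * ⟪b, u⟫ := by rw [hvu, real_inner_smul_right]
      _ ≤ nv * dualNorm N b := mul_le_mul_of_nonneg_left hle h0.le
      _ = dualNorm N b * nv := mul_comm _ _

end OPaux

/-- Deterministic excess-risk bound for objective perturbation (strongly convex case). -/
theorem objective_perturbation_strongly_convex {p : ℕ}
    (C : Set (EuclideanSpace ℝ (Fin p))) (hC : Convex ℝ C)
    (N : EuclideanSpace ℝ (Fin p) → ℝ) (hN : IsNorm N)
    (Δ : ℝ) (hΔ : 0 < Δ)
    (L : EuclideanSpace ℝ (Fin p) → ℝ)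
    (hLsc : ∀ x ∈ C, ∀ y ∈ C, ∀ α ∈ Set.Icc (0:ℝ) 1,
      L (α • x + (1 - α) • y) ≤
        α * L x + (1 - α) * L y - Δ * α * (1 - α) / 2 * (N (x - y)) ^ 2)
    (b : EuclideanSpace ℝ (Fin p))
    (θpriv : EuclideanSpace ℝ (Fin p)) (hθpriv : θpriv ∈ C)
    (hminpriv : ∀ θ ∈ C, L θpriv + ⟪b, θpriv⟫ ≤ L θ + ⟪b, θ⟫)
    (θs : EuclideanSpace ℝ (Fin p)) (hθs : θs ∈ C)
    (hminL : ∀ θ ∈ C, L θs ≤ L θ) :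
    N (θpriv - θs) ≤ 2 * dualNorm N b / Δ ∧
      L θpriv - L θs ≤ 2 * (dualNorm N b) ^ 2 / Δ := by
  obtain ⟨hDnn, hdual⟩ := OPaux.dualNorm_spec hN b
  set D := dualNorm N b with hD
  set n := N (θpriv - θs) with hn
  have hn0 : 0 ≤ n := OPaux.N_nonneg hN _
  -- midpoint
  set m : EuclideanSpace ℝ (Fin p) := (1/2 : ℝ) • θpriv + (1 - (1/2 : ℝ)) • θs with hm
  have hmC : m ∈ C := hC hθpriv hθs (by norm_num) (by norm_num) (by norm_num)
  have hsc := hLsc θpriv hθpriv θs hθs (1/2) (by constructor <;> norm_num)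
  -- hsc : L m ≤ (1/2) L θpriv + (1/2) L θs - Δ/8 n^2
  have hIn : ⟪b, m⟫ = (1/2 : ℝ) * ⟪b, θpriv⟫ + (1/2 : ℝ) * ⟪b, θs⟫ := by
    rw [hm, inner_add_right, real_inner_smul_right, real_inner_smul_right]
    norm_num
  have hI : L θs + Δ / 4 * n ^ 2 ≤ L θpriv := by
    have h1 := hminL m hmC
    rw [← hm] at hsc
    nlinarith [hsc, h1]
  have hII : L θpriv + ⟪b, θpriv⟫ + Δ / 4 * n ^ 2 ≤ L θs + ⟪b, θs⟫ := by
    have h1 := hminpriv m hmC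
    rw [← hm] at hsc
    nlinarith [hsc, h1, hIn]
  have hkey : Δ / 2 * n ^ 2 ≤ ⟪b, θs - θpriv⟫ := by
    rw [inner_sub_right]
    linarith
  have hdn : ⟪b, θs - θpriv⟫ ≤ D * n := by
    have h := hdual (θs - θpriv)
    have hNeq : N (θs - θpriv) = n := by
      rw [hn, show θs - θpriv = -(θpriv - θs) by abel, OPaux.N_neg hN]
    rw [hNeq] at h
    exact h
  have hgoal1 : n ≤ 2 * D / Δ := by
    rcases eq_or_lt_of_le hn0 with h0 | h0
    · rw [← h0]
      positivity
    · rw [le_div_iff₀ hΔ]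
      nlinarith
  refine ⟨hgoal1, ?_⟩
  have hLp : L θpriv - L θs ≤ ⟪b, θs - θpriv⟫ := by
    have h := hminpriv θs hθs
    rw [inner_sub_right]
    linarith
  calc L θpriv - L θs ≤ D * n := le_trans hLp hdn
    _ ≤ D * (2 * D / Δ) := mul_le_mul_of_nonneg_left hgoal1 hDnn
    _ = 2 * D ^ 2 / Δ := by ring
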